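/- In the algebra OSym of odd symmetric functions, for r < s the straightening rule holds: h_r h_s = h_s h_r if r ≡ s mod 2; h_r h_s = h_s h_r + 2·Σ_{t=1}^{r} (-1)^{binom(t,2)} h_{s+t} h_{r-t} if r is even and s is odd; and h_r h_s = -h_s h_r - 2·Σ_{t=1}^{r} (-1)^{binom(t+1,2)} h_{s+t} h_{r-t} if r is odd and s is even. -/

import Mathlib

/-- The defining relations of the algebra `OSym` of odd symmetric functions over a
field of characteristic `≠ 2`, in terms of the odd complete symmetric functions
`h_r` (`r ≥ 1`, with `h_0 = 1`). -/
def OSymHRels {A : Type*} [Ring A] (h : ℕ → A) : Prop :=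
  h 0 = 1 ∧
    (∀ r s : ℕ, 1 ≤ s → r % 2 = s % 2 → h r * h s = h s * h r) ∧
      ∀ r s : ℕ, 1 ≤ s → r % 2 ≠ s % 2 →
        h r * h s + (-1 : A) ^ r * (h s * h r) =
          (-1 : A) ^ r * (h (r + 1) * h (s - 1)) + h (s - 1) * h (r + 1)

private lemma choose_two_add_two (u : ℕ) :
    (u + 2).choose 2 = u.choose 2 + (2 * u + 1) := by
  have h1 : (u + 2).choose 2 = (u + 1).choose 1 + (u + 1).choose 2 := rfl
  have h2 : (u + 1).choose 2 = u.choose 1 + u.choose 2 := rfl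
  rw [h1, h2, Nat.choose_one_right, Nat.choose_one_right]
  omega

private lemma neg_one_pow_choose {A : Type*} [Ring A] (u : ℕ) :
    ((-1 : A)) ^ ((u + 2).choose 2) = -((-1 : A) ^ (u.choose 2)) := by
  rw [choose_two_add_two, pow_add]
  have hodd : ((-1 : A)) ^ (2 * u + 1) = -1 := Odd.neg_one_pow ⟨u, rfl⟩
  rw [hodd, mul_neg_one]

private lemma osym_aux {A : Type*} [Ring A] (h : ℕ → A) (hrels : OSymHRels h) :
    ∀ r : ℕ,
      (∀ s : ℕ, r < s → r % 2 = 0 → s % 2 = 1 →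
        h r * h s = h s * h r +
          2 * ∑ t ∈ Finset.Icc 1 r, (-1 : A) ^ t.choose 2 * (h (s + t) * h (r - t))) ∧
      (∀ s : ℕ, r < s → r % 2 = 1 → s % 2 = 0 →
        h r * h s = -(h s * h r) -
          2 * ∑ t ∈ Finset.Icc 1 r, (-1 : A) ^ (t + 1).choose 2 * (h (s + t) * h (r - t))) := by
  intro r
  induction r with
  | zero =>
    refine ⟨fun s _ _ _ => ?_, fun s _ hr _ => by omega⟩
    simp [hrels.1]
  | succ r ih =>
    constructor
    · -- r + 1 even, s odd
      intro s hlt hre hse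
      have rel := hrels.2.2 s (r + 1) (by omega) (by omega)
      simp only [Nat.add_sub_cancel] at rel
      have hs : ((-1 : A)) ^ s = -1 := Odd.neg_one_pow (Nat.odd_iff.mpr hse)
      simp only [hs, neg_one_mul] at rel
      -- rel : h s * h (r+1) + -(h (r+1) * h s) = -(h (s+1) * h r) + h r * h (s+1)
      have ihd := ih.2 (s + 1) (by omega) (by omega) (by omega)
      have hsum : ∑ t ∈ Finset.Icc 1 (r + 1),
            (-1 : A) ^ t.choose 2 * (h (s + t) * h (r + 1 - t))
          = h (s + 1) * h r +
            ∑ t ∈ Finset.Icc 1 r, (-1 : A) ^ (t + 1).choose 2 * (h (s + 1 + t) * h (r - t)) := by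
        rw [← Finset.Ico_add_one_right_eq_Icc, ← Finset.Ico_add_one_right_eq_Icc,
          Finset.sum_Ico_eq_sum_range, Finset.sum_Ico_eq_sum_range]
        simp only [Nat.add_sub_cancel]
        rw [Finset.sum_range_succ', add_comm]
        congr 1
        · norm_num
        · refine Finset.sum_congr rfl fun i _ => ?_
          simp only [show 1 + (i + 1) = (1 + i) + 1 from by omega,
            show s + ((1 + i) + 1) = s + 1 + (1 + i) from by omega,
            show r + 1 - ((1 + i) + 1) = r - (1 + i) from by omega]
      have hb : h (r + 1) * h s
          = h s * h (r + 1) + h (s + 1) * h r - h r * h (s + 1) := by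
        have e : h (r + 1) * h s
            = h s * h (r + 1) - (h s * h (r + 1) + -(h (r + 1) * h s)) := by noncomm_ring
        rw [e, rel]; noncomm_ring
      rw [hsum, hb, ihd]
      noncomm_ring
    · -- r + 1 odd, s even
      intro s hlt hre hse
      have rel := hrels.2.2 s (r + 1) (by omega) (by omega)
      simp only [Nat.add_sub_cancel] at rel
      have hs : ((-1 : A)) ^ s = 1 := Even.neg_one_pow (Nat.even_iff.mpr hse)
      simp only [hs, one_mul] at rel
      -- rel : h s * h (r+1) + h (r+1) * h s = h (s+1) * h r + h r * h (s+1)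
      have ihd := ih.1 (s + 1) (by omega) (by omega) (by omega)
      have hsum : ∑ t ∈ Finset.Icc 1 (r + 1),
            (-1 : A) ^ (t + 1).choose 2 * (h (s + t) * h (r + 1 - t))
          = -(h (s + 1) * h r) -
            ∑ t ∈ Finset.Icc 1 r, (-1 : A) ^ t.choose 2 * (h (s + 1 + t) * h (r - t)) := by
        rw [← Finset.Ico_add_one_right_eq_Icc, ← Finset.Ico_add_one_right_eq_Icc,
          Finset.sum_Ico_eq_sum_range, Finset.sum_Ico_eq_sum_range]
        simp only [Nat.add_sub_cancel]
        rw [Finset.sum_range_succ', add_comm, sub_eq_add_neg, ← Finset.sum_neg_distrib]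
        congr 1
        · norm_num
        · refine Finset.sum_congr rfl fun i _ => ?_
          rw [show 1 + (i + 1) + 1 = (1 + i) + 2 from by omega, neg_one_pow_choose,
            show s + (1 + (i + 1)) = s + 1 + (1 + i) from by omega,
            show r + 1 - (1 + (i + 1)) = r - (1 + i) from by omega, neg_mul]
      have hb : h (r + 1) * h s
          = h (s + 1) * h r + h r * h (s + 1) - h s * h (r + 1) := by
        have e : h (r + 1) * h s
            = (h s * h (r + 1) + h (r + 1) * h s) - h s * h (r + 1) := by noncomm_ring
        rw [e, rel]
      rw [hsum, hb, ihd]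
      noncomm_ring

/-- The straightening rule in `OSym`, for `r < s`:  `h_r h_s = h_s h_r` if `r ≡ s mod 2`;
`h_r h_s = h_s h_r + 2 ∑_{t=1}^r (-1)^{binom(t,2)} h_{s+t} h_{r-t}` if `r` even, `s` odd;
`h_r h_s = -h_s h_r - 2 ∑_{t=1}^r (-1)^{binom(t+1,2)} h_{s+t} h_{r-t}` if `r` odd, `s` even. -/
theorem statement9 {k A : Type*} [Field k] [Ring A] [Algebra k A] (h2 : (2 : k) ≠ 0)
    (h : ℕ → A) (hrels : OSymHRels h) (r s : ℕ) (hrs : r < s) :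
    (r % 2 = s % 2 → h r * h s = h s * h r) ∧
      (r % 2 = 0 → s % 2 = 1 →
        h r * h s =
          h s * h r +
            2 * ∑ t ∈ Finset.Icc 1 r, (-1 : A) ^ t.choose 2 * (h (s + t) * h (r - t))) ∧
      (r % 2 = 1 → s % 2 = 0 →
        h r * h s =
          -(h s * h r) -
            2 * ∑ t ∈ Finset.Icc 1 r,
              (-1 : A) ^ (t + 1).choose 2 * (h (s + t) * h (r - t))) := by
  obtain ⟨P, Q⟩ := osym_aux h hrels r
  exact ⟨fun hp => hrels.2.1 r s (by omega) hp,
    fun h1 h2 => P s hrs h1 h2, fun h1 h2 => Q s hrs h1 h2⟩
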